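/- For every n ≥ 1, the map sending an n × n alternating sign matrix (a_{i,j}) to the triangular array whose i-th row (for 1 ≤ i ≤ n) consists of the columns j, listed in increasing order, for which Σ_{i'=1}^{i} a_{i',j} = 1, is a bijection from the set of n × n alternating sign matrices to the set of monotone triangles with bottom row (1,2,…,n). In particular, the number of n × n alternating sign matrices equals the number of monotone triangles with bottom row (1,2,…,n). -/

import Mathlib

/-- A triangular array of integers `(T_{i,j})_{1 ≤ j ≤ i ≤ n}` (0-indexed: row `i` has
`i+1` entries). -/
abbrev TriArray (n : ℕ) := (i : Fin n) → Fin (i.1 + 1) → ℤ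

/-- The bottom row of the triangular array `T` is `k`. -/
def BottomRow {n : ℕ} (T : TriArray n) (k : Fin n → ℤ) : Prop :=
  ∀ (i : Fin n) (h : i.1 + 1 = n) (j : Fin (i.1 + 1)), T i j = k (Fin.cast h j)

/-- `T` is a (classical) monotone triangle with bottom row `k`: entries increase weakly
along both diagonals and strictly along rows. -/
def IsMT {n : ℕ} (T : TriArray n) (k : Fin n → ℤ) : Prop :=
  BottomRow T k ∧
  (∀ (i : Fin n) (h : i.1 + 1 < n) (j : Fin (i.1 + 1)),
    T ⟨i.1 + 1, h⟩ j.castSucc ≤ T i j ∧ T i j ≤ T ⟨i.1 + 1, h⟩ j.succ) ∧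
  (∀ (i : Fin n) (j : Fin i.1), T i j.castSucc < T i j.succ)

/-- The nonzero entries of `v` alternate in sign and sum up to `1`, and all entries
are in `{0, 1, -1}`. -/
def AltLine {n : ℕ} (v : Fin n → ℤ) : Prop :=
  (∀ j, v j = 0 ∨ v j = 1 ∨ v j = -1) ∧
  (∑ j, v j) = 1 ∧
  ∀ j₁ j₂ : Fin n, j₁ < j₂ → v j₁ ≠ 0 → v j₂ ≠ 0 →
    (∀ j, j₁ < j → j < j₂ → v j = 0) → v j₂ = -v j₁

/-- `M` is an alternating sign matrix: entries in `{0,1,-1}` such that in each row and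
each column the nonzero entries alternate in sign and sum up to `1`. -/
def IsASM {n : ℕ} (M : Fin n → Fin n → ℤ) : Prop :=
  (∀ i, AltLine (M i)) ∧ ∀ j, AltLine fun i => M i j

/-- The triangular array `T` corresponds to the matrix `M`: for every `i`, the `i`-th row
of `T` consists exactly of those columns `j` (as values `j+1`, and rows of monotone
triangles are strictly increasing, so listed in increasing order) for which
`Σ_{i'=1}^{i} M_{i',j} = 1`. -/
def ASMCorr {n : ℕ} (M : Fin n → Fin n → ℤ) (T : TriArray n) : Prop :=
  ∀ (i : Fin n) (j : Fin n),
    (∑ i' ∈ Finset.Iic i, M i' j) = 1 ↔ ∃ j' : Fin (i.1 + 1), T i j' = (j.1 : ℤ) + 1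


namespace AsmMt

variable {N : ℕ}

def pre (v : Fin N → ℤ) (j : Fin N) : ℤ := ∑ j' ∈ Finset.Iic j, v j'

lemma Iic_eq_insert {a b : Fin N} (h : b.1 = a.1 + 1) :
    Finset.Iic b = insert b (Finset.Iic a) := by
  ext x
  simp only [Finset.mem_Iic, Finset.mem_insert, Fin.le_def, Fin.ext_iff]
  omega

lemma pre_succ (v : Fin N → ℤ) {a b : Fin N} (h : b.1 = a.1 + 1) :
    pre v b = pre v a + v b := by
  have hnb : b ∉ Finset.Iic a := by
    simp only [Finset.mem_Iic, Fin.le_def]; omega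
  rw [pre, Iic_eq_insert h, Finset.sum_insert hnb, pre]; ring

lemma pre_zero (v : Fin N → ℤ) {b : Fin N} (h : b.1 = 0) : pre v b = v b := by
  have : Finset.Iic b = {b} := by
    ext x; simp only [Finset.mem_Iic, Finset.mem_singleton, Fin.le_def, Fin.ext_iff]; omega
  rw [pre, this, Finset.sum_singleton]

lemma pre_last (v : Fin N → ℤ) {b : Fin N} (h : b.1 + 1 = N) : pre v b = ∑ j, v j := by
  have : Finset.Iic b = Finset.univ := by
    ext x; simp only [Finset.mem_Iic, Finset.mem_univ, Fin.le_def, iff_true]; omega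
  rw [pre, this]

lemma altline_key {v : Fin N → ℤ} (hv : AltLine v) :
    ∀ m : ℕ, ∀ j : Fin N, j.1 = m →
    (pre v j = 0 ∧ ∀ j' ≤ j, v j' = 0) ∨
    (∃ j0 j1 : Fin N, j0 ≤ j1 ∧ j1 ≤ j ∧ v j0 ≠ 0 ∧ (∀ j' < j0, v j' = 0) ∧
      v j1 ≠ 0 ∧ (∀ j', j1 < j' → j' ≤ j → v j' = 0) ∧ 2 * pre v j = v j0 + v j1) := by
  obtain ⟨hval, hsum, halt⟩ := hv
  intro m
  induction m with
  | zero =>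
    intro j hj
    rcases eq_or_ne (v j) 0 with h0 | h0
    · left
      refine ⟨by rw [pre_zero v hj, h0], ?_⟩
      intro j' hj'
      have : j' = j := by
        rw [Fin.le_def] at hj'; apply Fin.ext; omega
      rw [this, h0]
    · right
      refine ⟨j, j, le_refl _, le_refl _, h0, ?_, h0, ?_, ?_⟩
      · intro j' hj'; rw [Fin.lt_def] at hj'; omega
      · intro j' h1 h2; exact absurd (lt_of_lt_of_le h1 h2) (lt_irrefl _)
      · rw [pre_zero v hj]; ring
  | succ m ih =>
    intro j hj
    have hmN : m < N := by omega
    set a : Fin N := ⟨m, hmN⟩ with ha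
    have ha' : j.1 = a.1 + 1 := hj
    have hpre := pre_succ v ha'
    rcases eq_or_ne (v j) 0 with h0 | h0
    · rcases ih a rfl with ⟨hp, hz⟩ | ⟨j0, j1, h01, h1a, hv0, hz0, hv1, hz1, heq⟩
      · left
        refine ⟨by rw [hpre, hp, h0]; ring, ?_⟩
        intro j' hj'
        rcases eq_or_ne j' j with rfl | hne
        · exact h0
        · refine hz j' ?_
          have hne' := Fin.val_ne_of_ne hne
          rw [Fin.le_def] at hj' ⊢
          omega
      · right
        refine ⟨j0, j1, h01, le_trans h1a (by rw [Fin.le_def]; omega), hv0, hz0, hv1, ?_, ?_⟩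
        · intro j' h1 h2
          rcases eq_or_ne j' j with rfl | hne
          · exact h0
          · refine hz1 j' h1 ?_
            have hne' := Fin.val_ne_of_ne hne
            rw [Fin.le_def] at h2 ⊢
            omega
        · rw [hpre, h0]; linarith
    · rcases ih a rfl with ⟨hp, hz⟩ | ⟨j0, j1, h01, h1a, hv0, hz0, hv1, hz1, heq⟩
      · right
        refine ⟨j, j, le_refl _, le_refl _, h0, ?_, h0, ?_, ?_⟩
        · intro j' hj'
          refine hz j' ?_
          rw [Fin.lt_def] at hj'; rw [Fin.le_def]; omega
        · intro j' h1 h2; exact absurd (lt_of_lt_of_le h1 h2) (lt_irrefl _)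
        · rw [hpre, hp]; ring
      · have hlt : j1 < j := by
          rw [Fin.lt_def]; rw [Fin.le_def] at h1a; omega
        have halt' : v j = -v j1 := by
          refine halt j1 j hlt hv1 h0 ?_
          intro x hx1 hx2
          refine hz1 x hx1 ?_
          rw [Fin.lt_def] at hx2; rw [Fin.le_def]; omega
        right
        refine ⟨j0, j, le_trans h01 (le_of_lt hlt), le_refl _, hv0, hz0, h0, ?_, ?_⟩
        · intro j' h1 h2; exact absurd (lt_of_lt_of_le h1 h2) (lt_irrefl _)
        · rw [hpre]
          have : v j1 = -v j := by rw [halt']; ring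
          rw [this] at heq; linarith

lemma altline_first {v : Fin N → ℤ} (hv : AltLine v) :
    ∃ j0 : Fin N, v j0 = 1 ∧ ∀ j' < j0, v j' = 0 := by
  have hN : 0 < N := by
    by_contra h
    have : (∑ j, v j) = 0 := by
      rw [Finset.sum_eq_zero]; intro x _; exact absurd x.2 (by omega)
    rw [hv.2.1] at this; exact one_ne_zero this
  set b : Fin N := ⟨N - 1, by omega⟩ with hb
  have hbv : b.1 = N - 1 := rfl
  have hlast : pre v b = 1 := by rw [pre_last v (by omega)]; exact hv.2.1
  rcases altline_key hv (N - 1) b rfl with ⟨hp, _⟩ | ⟨j0, j1, _, _, hv0, hz0, hv1, _, heq⟩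
  · rw [hp] at hlast; exact absurd hlast (by norm_num)
  · rw [hlast] at heq
    rcases hv.1 j0 with h | h | h
    · exact absurd h hv0
    · exact ⟨j0, h, hz0⟩
    · rcases hv.1 j1 with h' | h' | h' <;> omega

lemma AltLine.pre_mem {v : Fin N → ℤ} (hv : AltLine v) (j : Fin N) :
    pre v j = 0 ∨ pre v j = 1 := by
  obtain ⟨j0, hj0, hz0⟩ := altline_first hv
  rcases altline_key hv j.1 j rfl with ⟨hp, _⟩ | ⟨j0', j1, h01, _, hv0', hz0', hv1, _, heq⟩
  · left; exact hp
  · have : j0' = j0 := by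
      rcases lt_trichotomy j0' j0 with h | h | h
      · exact absurd (hz0 j0' h) hv0'
      · exact h
      · exact absurd (hz0' j0 h) (by rw [hj0]; norm_num)
    rw [this, hj0] at heq
    rcases hv.1 j1 with h | h | h
    · exact absurd h hv1
    · right; omega
    · left; omega


lemma pre_gap {v : Fin N → ℤ} :
    ∀ d : ℕ, ∀ {j1 j2 : Fin N}, j2.1 = j1.1 + d + 1 →
    (∀ j, j1 < j → j < j2 → v j = 0) → pre v j2 = pre v j1 + v j2 := by
  intro d
  induction d with
  | zero => intro j1 j2 h _; exact pre_succ v h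
  | succ d ih =>
    intro j1 j2 h hz
    have haN : j1.1 + d + 1 < N := by omega
    set a : Fin N := ⟨j1.1 + d + 1, haN⟩ with ha
    have hav : a.1 = j1.1 + d + 1 := rfl
    have h2 : pre v a = pre v j1 + v a :=
      ih rfl (fun x hx1 hx2 => hz x hx1 (lt_trans hx2 (by rw [Fin.lt_def]; omega)))
    have h3 : pre v j2 = pre v a + v j2 := pre_succ v (by omega)
    have h4 : v a = 0 := hz a (by rw [Fin.lt_def]; omega) (by rw [Fin.lt_def]; omega)
    rw [h3, h2, h4]; ring

lemma entry_mem_of_pre {v : Fin N → ℤ} (h0 : ∀ j, pre v j = 0 ∨ pre v j = 1) (j : Fin N) :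
    v j = 0 ∨ v j = 1 ∨ v j = -1 := by
  rcases Nat.eq_zero_or_pos j.1 with h | h
  · have hp := pre_zero v h
    rcases h0 j with hh | hh <;> omega
  · set a : Fin N := ⟨j.1 - 1, by omega⟩ with ha
    have hav : a.1 = j.1 - 1 := rfl
    have hp := pre_succ v (a := a) (b := j) (by omega)
    rcases h0 j with hh | hh <;> rcases h0 a with hh' | hh' <;> omega

lemma pre_of_ne_zero {v : Fin N → ℤ} (h0 : ∀ j, pre v j = 0 ∨ pre v j = 1) {j : Fin N}
    (hj : v j ≠ 0) : 2 * pre v j = 1 + v j := by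
  rcases Nat.eq_zero_or_pos j.1 with h | h
  · have hp := pre_zero v h
    rcases h0 j with hh | hh <;> omega
  · set a : Fin N := ⟨j.1 - 1, by omega⟩ with ha
    have hav : a.1 = j.1 - 1 := rfl
    have hp := pre_succ v (a := a) (b := j) (by omega)
    rcases h0 j with hh | hh <;> rcases h0 a with hh' | hh' <;> omega

lemma altline_of_pre {v : Fin N → ℤ} (hN : 0 < N)
    (h0 : ∀ j, pre v j = 0 ∨ pre v j = 1)
    (h1 : pre v ⟨N - 1, Nat.sub_lt hN Nat.one_pos⟩ = 1) : AltLine v := by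
  refine ⟨entry_mem_of_pre h0, ?_, ?_⟩
  · rw [← pre_last v (b := ⟨N - 1, Nat.sub_lt hN Nat.one_pos⟩) (by show N - 1 + 1 = N; omega)]
    exact h1
  · intro j1 j2 hlt hv1 hv2 hz
    have hlt' : j1.1 < j2.1 := hlt
    have hg : pre v j2 = pre v j1 + v j2 :=
      pre_gap (j2.1 - j1.1 - 1) (by omega) hz
    have k1 := pre_of_ne_zero h0 hv1
    have k2 := pre_of_ne_zero h0 hv2
    omega


lemma orderEmb_le_iff {s : Finset (Fin N)} {m : ℕ} (h : s.card = m) (k : Fin m) (x : Fin N) :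
    s.orderEmbOfFin h k ≤ x ↔ k.1 + 1 ≤ (s ∩ Finset.Iic x).card := by
  set f := s.orderEmbOfFin h with hf
  constructor
  · intro hk
    have hsub : (Finset.Iic k).image f ⊆ s ∩ Finset.Iic x := by
      intro y hy
      simp only [Finset.mem_image] at hy
      obtain ⟨k', hk', rfl⟩ := hy
      rw [Finset.mem_Iic] at hk'
      exact Finset.mem_inter.mpr ⟨Finset.orderEmbOfFin_mem s h k',
        Finset.mem_Iic.mpr (le_trans (f.monotone hk') hk)⟩
    have hc := Finset.card_le_card hsub
    rwa [Finset.card_image_of_injective _ f.injective, Fin.card_Iic] at hc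
  · intro hk
    set I : Finset (Fin m) := Finset.univ.filter (fun k' => f k' ≤ x) with hI
    have hsub : s ∩ Finset.Iic x ⊆ I.image f := by
      intro y hy
      rw [Finset.mem_inter, Finset.mem_Iic] at hy
      have hy1 : y ∈ Set.range f := by
        rw [hf, Finset.range_orderEmbOfFin]; exact hy.1
      obtain ⟨k', hk'⟩ := hy1
      refine Finset.mem_image.mpr ⟨k', ?_, hk'⟩
      simp only [hI, Finset.mem_filter, Finset.mem_univ, true_and]
      rw [hk']; exact hy.2
    have hcI : k.1 + 1 ≤ I.card :=
      le_trans hk (le_trans (Finset.card_le_card hsub) Finset.card_image_le)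
    by_contra hkx
    have hIsub : I ⊆ Finset.Iio k := by
      intro k' hk'
      rw [Finset.mem_Iio]
      by_contra hge
      push_neg at hge
      exact hkx (le_trans (f.monotone hge) (Finset.mem_filter.mp hk').2)
    have hle := Finset.card_le_card hIsub
    rw [Fin.card_Iio] at hle
    omega

lemma emb_le {s : Finset (Fin N)} {m : ℕ} (h : s.card = m) (k : Fin m) (x : Fin N)
    (hc : k.1 + 1 ≤ (s ∩ Finset.Iic x).card) : (s.orderEmbOfFin h k).1 ≤ x.1 :=
  (orderEmb_le_iff h k x).mpr hc

lemma emb_count {s : Finset (Fin N)} {m : ℕ} (h : s.card = m) (k : Fin m) :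
    k.1 + 1 ≤ (s ∩ Finset.Iic (s.orderEmbOfFin h k)).card :=
  (orderEmb_le_iff h k _).mp le_rfl

lemma pre_eq_card {w : Fin N → ℤ} (hw : ∀ j, w j = 0 ∨ w j = 1) (x : Fin N) :
    pre w x = ((Finset.univ.filter (fun j => w j = 1)) ∩ Finset.Iic x).card := by
  have h1 : (Finset.univ.filter (fun j => w j = 1)) ∩ Finset.Iic x
      = (Finset.Iic x).filter (fun j => w j = 1) := by
    ext y
    simp only [Finset.mem_filter, Finset.mem_inter, Finset.mem_Iic, Finset.mem_univ, true_and]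
    tauto
  rw [h1, pre, ← Finset.sum_boole]
  apply Finset.sum_congr rfl
  intro j _
  rcases hw j with h | h <;> simp [h]

lemma sum_eq_card {w : Fin N → ℤ} (hw : ∀ j, w j = 0 ∨ w j = 1) :
    (∑ j, w j) = (Finset.univ.filter (fun j => w j = 1)).card := by
  rw [← Finset.sum_boole]
  apply Finset.sum_congr rfl
  intro j _
  rcases hw j with h | h <;> simp [h]


/-! ### Monotone triangle generalities -/

lemma mt_row_strictMono {n : ℕ} {T : TriArray (n+1)} {k} (hT : IsMT T k) (i : Fin (n+1)) :
    StrictMono (T i) :=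
  Fin.strictMono_iff_lt_succ.mpr (hT.2.2 i)

lemma mt_bounds {n : ℕ} {T : TriArray (n+1)} (hT : IsMT T (fun j => (j.1 : ℤ) + 1)) :
    ∀ (i : Fin (n+1)) (j : Fin (i.1+1)), 1 ≤ T i j ∧ T i j ≤ (n : ℤ) + 1 := by
  have aux : ∀ d : ℕ, ∀ (i : Fin (n+1)), i.1 + d = n →
      ∀ (j : Fin (i.1+1)), 1 ≤ T i j ∧ T i j ≤ (n : ℤ) + 1 := by
    intro d
    induction d with
    | zero =>
      intro i hi j
      have h : i.1 + 1 = n + 1 := by omega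
      rw [hT.1 i h j]
      have hj := j.2
      have hc : (Fin.cast h j).1 = j.1 := rfl
      show (1:ℤ) ≤ ((Fin.cast h j).1 : ℤ) + 1 ∧ ((Fin.cast h j).1 : ℤ) + 1 ≤ (n:ℤ) + 1
      rw [hc]
      constructor <;> (push_cast; omega)
    | succ d ih =>
      intro i hi j
      have h : i.1 + 1 < n + 1 := by omega
      obtain ⟨h1, h2⟩ := hT.2.1 i h j
      have hd : (⟨i.1 + 1, h⟩ : Fin (n+1)).1 + d = n := by show i.1 + 1 + d = n; omega
      have b1 := ih ⟨i.1 + 1, h⟩ hd j.castSucc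
      have b2 := ih ⟨i.1 + 1, h⟩ hd j.succ
      exact ⟨le_trans b1.1 h1, le_trans h2 b2.2⟩
  intro i j
  exact aux (n - i.1) i (by omega) j

/-- The row of a monotone triangle as a strictly monotone map into `Fin (n+1)`. -/
def mtG {n : ℕ} (T : TriArray (n+1)) (hT : IsMT T (fun j => (j.1 : ℤ) + 1))
    (i : Fin (n+1)) (j' : Fin (i.1+1)) : Fin (n+1) :=
  ⟨(T i j' - 1).toNat, by
    obtain ⟨h1, h2⟩ := mt_bounds hT i j'
    omega⟩

lemma mtG_spec {n : ℕ} (T : TriArray (n+1)) (hT : IsMT T (fun j => (j.1 : ℤ) + 1))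
    (i : Fin (n+1)) (j' : Fin (i.1+1)) : ((mtG T hT i j').1 : ℤ) + 1 = T i j' := by
  obtain ⟨h1, h2⟩ := mt_bounds hT i j'
  show ((T i j' - 1).toNat : ℤ) + 1 = T i j'
  omega

lemma mtG_strictMono {n : ℕ} (T : TriArray (n+1)) (hT : IsMT T (fun j => (j.1 : ℤ) + 1))
    (i : Fin (n+1)) : StrictMono (mtG T hT i) := by
  intro j1 j2 hlt
  have := mt_row_strictMono hT i hlt
  have s1 := mtG_spec T hT i j1
  have s2 := mtG_spec T hT i j2
  rw [Fin.lt_def]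
  omega

/-! ### From ASMs to monotone triangles -/

section ASMtoMT

variable {n : ℕ} (M : Fin (n+1) → Fin (n+1) → ℤ)

def colP : Fin (n+1) → Fin (n+1) → ℤ := fun i j => ∑ i' ∈ Finset.Iic i, M i' j

lemma colP_eq_pre (i j : Fin (n+1)) : colP M i j = pre (fun i' => M i' j) i := rfl

def colA : Fin (n+1) → Finset (Fin (n+1)) :=
  fun i => Finset.univ.filter (fun j => colP M i j = 1)

variable {M} (hM : IsASM M)
include hM

lemma colP01 (i j : Fin (n+1)) : colP M i j = 0 ∨ colP M i j = 1 :=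
  AltLine.pre_mem (hM.2 j) i

lemma rowP01 (i x : Fin (n+1)) : pre (M i) x = 0 ∨ pre (M i) x = 1 :=
  AltLine.pre_mem (hM.1 i) x

lemma cardA (i : Fin (n+1)) : (colA M i).card = i.1 + 1 := by
  have h1 : (∑ j, colP M i j) = ((colA M i).card : ℤ) := sum_eq_card (colP01 hM i)
  have h2 : (∑ j, colP M i j) = ((i.1 : ℤ) + 1) := by
    unfold colP
    rw [Finset.sum_comm]
    have h3 : ∀ i' ∈ Finset.Iic i, (∑ j, M i' j) = 1 := fun i' _ => (hM.1 i').2.1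
    rw [Finset.sum_congr rfl h3, Finset.sum_const, Fin.card_Iic]
    push_cast; ring
  have := h1.symm.trans h2
  exact_mod_cast this

lemma cardAx (i x : Fin (n+1)) :
    pre (fun j => colP M i j) x = ((colA M i ∩ Finset.Iic x).card : ℤ) :=
  pre_eq_card (colP01 hM i) x

omit hM

lemma colP_succ (i : Fin (n+1)) (h : i.1 + 1 < n + 1) (j : Fin (n+1)) :
    colP M ⟨i.1 + 1, h⟩ j = colP M i j + M ⟨i.1 + 1, h⟩ j :=
  pre_succ (fun i' => M i' j) rfl

include hM

lemma cardA_step (i : Fin (n+1)) (h : i.1 + 1 < n + 1) (x : Fin (n+1)) :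
    ((colA M ⟨i.1 + 1, h⟩ ∩ Finset.Iic x).card : ℤ)
      = ((colA M i ∩ Finset.Iic x).card : ℤ) + pre (M ⟨i.1 + 1, h⟩) x := by
  rw [← cardAx hM, ← cardAx hM]
  unfold pre
  rw [← Finset.sum_add_distrib]
  exact Finset.sum_congr rfl (fun j _ => colP_succ (M := M) i h j)

/-- The monotone triangle associated to an ASM. -/
noncomputable def asmT : TriArray (n+1) :=
  fun i j' => (((colA M i).orderEmbOfFin (cardA hM i) j').1 : ℤ) + 1

lemma asmT_isMT : IsMT (asmT hM) (fun j => (j.1 : ℤ) + 1) := by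
  refine ⟨?_, ?_, ?_⟩
  · -- bottom row
    intro i h j
    have hA : colA M i = Finset.univ := by
      ext j'
      simp only [colA, Finset.mem_filter, Finset.mem_univ, true_and, iff_true]
      rw [colP_eq_pre, pre_last _ (by omega)]
      exact (hM.2 j').2.1
    have hfm : ∀ k : Fin (i.1+1), (⟨k.1, by omega⟩ : Fin (n+1)) ∈ colA M i := by
      intro k; rw [hA]; exact Finset.mem_univ _
    have hsm : StrictMono (fun k : Fin (i.1+1) => (⟨k.1, by omega⟩ : Fin (n+1))) := by
      intro a b hab; rw [Fin.lt_def]; exact hab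
    have := Finset.orderEmbOfFin_unique (cardA hM i) hfm hsm
    have happ : (⟨j.1, by omega⟩ : Fin (n+1)) = (colA M i).orderEmbOfFin (cardA hM i) j :=
      congrFun this j
    show (((colA M i).orderEmbOfFin (cardA hM i) j).1 : ℤ) + 1 = ((Fin.cast h j).1 : ℤ) + 1
    rw [← happ]
    rfl
  · -- diagonals
    intro i h j
    constructor
    · show (((colA M ⟨i.1+1, h⟩).orderEmbOfFin (cardA hM ⟨i.1+1, h⟩) j.castSucc).1 : ℤ) + 1
        ≤ (((colA M i).orderEmbOfFin (cardA hM i) j).1 : ℤ) + 1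
      have h1 := emb_count (cardA hM i) j
      have h2 := cardA_step hM i h ((colA M i).orderEmbOfFin (cardA hM i) j)
      rcases rowP01 hM ⟨i.1+1, h⟩ ((colA M i).orderEmbOfFin (cardA hM i) j) with h3 | h3 <;>
      · have h4 : j.castSucc.1 + 1
            ≤ (colA M ⟨i.1+1, h⟩ ∩ Finset.Iic ((colA M i).orderEmbOfFin (cardA hM i) j)).card := by
          have hcs : j.castSucc.1 = j.1 := rfl
          omega
        have h5 := emb_le (cardA hM ⟨i.1+1, h⟩) j.castSucc _ h4
        omega
    · show (((colA M i).orderEmbOfFin (cardA hM i) j).1 : ℤ) + 1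
        ≤ (((colA M ⟨i.1+1, h⟩).orderEmbOfFin (cardA hM ⟨i.1+1, h⟩) j.succ).1 : ℤ) + 1
      have h1 := emb_count (cardA hM ⟨i.1+1, h⟩) j.succ
      have h2 := cardA_step hM i h ((colA M ⟨i.1+1, h⟩).orderEmbOfFin (cardA hM ⟨i.1+1, h⟩) j.succ)
      rcases rowP01 hM ⟨i.1+1, h⟩ ((colA M ⟨i.1+1, h⟩).orderEmbOfFin (cardA hM ⟨i.1+1, h⟩) j.succ) with h3 | h3 <;>
      · have h4 : j.1 + 1
            ≤ (colA M i ∩ Finset.Iic ((colA M ⟨i.1+1, h⟩).orderEmbOfFin (cardA hM ⟨i.1+1, h⟩) j.succ)).card := by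
          have hcs : j.succ.1 = j.1 + 1 := rfl
          omega
        have h5 := emb_le (cardA hM i) j _ h4
        omega
  · -- rows strictly increasing
    intro i j
    have := ((colA M i).orderEmbOfFin (cardA hM i)).strictMono (Fin.castSucc_lt_succ : j.castSucc < j.succ)
    rw [Fin.lt_def] at this
    show (((colA M i).orderEmbOfFin (cardA hM i) j.castSucc).1 : ℤ) + 1
      < (((colA M i).orderEmbOfFin (cardA hM i) j.succ).1 : ℤ) + 1
    omega

lemma asmT_corr : ASMCorr M (asmT hM) := by
  intro i j
  constructor
  · intro hc
    have hj : j ∈ colA M i := by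
      simp only [colA, Finset.mem_filter, Finset.mem_univ, true_and]
      exact hc
    have hr : j ∈ Set.range ((colA M i).orderEmbOfFin (cardA hM i)) := by
      rw [Finset.range_orderEmbOfFin]
      exact hj
    obtain ⟨j', hj'⟩ := hr
    refine ⟨j', ?_⟩
    show (((colA M i).orderEmbOfFin (cardA hM i) j').1 : ℤ) + 1 = (j.1 : ℤ) + 1
    rw [hj']
  · rintro ⟨j', hj'⟩
    have hv : (((colA M i).orderEmbOfFin (cardA hM i) j').1 : ℤ) + 1 = (j.1 : ℤ) + 1 := hj'
    have hval : ((colA M i).orderEmbOfFin (cardA hM i) j').1 = j.1 := by omega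
    have hmem := Finset.orderEmbOfFin_mem (colA M i) (cardA hM i) j'
    rw [Fin.ext hval] at hmem
    simp only [colA, Finset.mem_filter, Finset.mem_univ, true_and] at hmem
    exact hmem

lemma asmT_unique (T' : TriArray (n+1)) (hT' : IsMT T' (fun j => (j.1 : ℤ) + 1))
    (hcorr : ASMCorr M T') : T' = asmT hM := by
  funext i j'
  have hg : ∀ j'' : Fin (i.1 + 1), mtG T' hT' i j'' ∈ colA M i := by
    intro j''
    simp only [colA, Finset.mem_filter, Finset.mem_univ, true_and]
    exact (hcorr i (mtG T' hT' i j'')).mpr ⟨j'', (mtG_spec T' hT' i j'').symm⟩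
  have heq := Finset.orderEmbOfFin_unique (cardA hM i) hg (mtG_strictMono T' hT' i)
  have happ := congrFun heq j'
  show T' i j' = (((colA M i).orderEmbOfFin (cardA hM i) j').1 : ℤ) + 1
  rw [← happ]
  exact (mtG_spec T' hT' i j').symm

end ASMtoMT

/-! ### From monotone triangles to ASMs -/

section MTtoASM

variable {n : ℕ} (T : TriArray (n+1)) (hT : IsMT T (fun j => (j.1 : ℤ) + 1))

def mtB (i : Fin (n+1)) : Finset (Fin (n+1)) := Finset.univ.image (mtG T hT i)

lemma mtB_mem (i j : Fin (n+1)) :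
    j ∈ mtB T hT i ↔ ∃ j' : Fin (i.1 + 1), T i j' = (j.1 : ℤ) + 1 := by
  simp only [mtB, Finset.mem_image, Finset.mem_univ, true_and]
  constructor
  · rintro ⟨j', rfl⟩
    exact ⟨j', (mtG_spec T hT i j').symm⟩
  · rintro ⟨j', hj'⟩
    refine ⟨j', ?_⟩
    apply Fin.ext
    have hs := mtG_spec T hT i j'
    rw [hj'] at hs
    omega

lemma mtB_card (i : Fin (n+1)) : (mtB T hT i).card = i.1 + 1 := by
  rw [mtB, Finset.card_image_of_injective _ (mtG_strictMono T hT i).injective,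
    Finset.card_univ, Fintype.card_fin]

def mtSS : Fin (n+1) → Fin (n+1) → ℤ := fun i j => if j ∈ mtB T hT i then 1 else 0

def mtM : Fin (n+1) → Fin (n+1) → ℤ := fun i j =>
  mtSS T hT i j -
    (if h : 0 < i.1 then mtSS T hT ⟨i.1 - 1, Nat.lt_of_le_of_lt (Nat.sub_le _ _) i.2⟩ j else 0)

lemma mtM_zero {i : Fin (n+1)} (h : i.1 = 0) (j : Fin (n+1)) :
    mtM T hT i j = mtSS T hT i j := by
  unfold mtM
  rw [dif_neg (by omega)]
  ring

lemma mtM_succ {i a : Fin (n+1)} (h : i.1 = a.1 + 1) (j : Fin (n+1)) :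
    mtM T hT i j = mtSS T hT i j - mtSS T hT a j := by
  have key : ∀ (p : i.1 - 1 < n + 1), (⟨i.1 - 1, p⟩ : Fin (n+1)) = a :=
    fun p => Fin.ext (show i.1 - 1 = a.1 by omega)
  unfold mtM
  rw [dif_pos (by omega), key]

lemma mtM_colP (i j : Fin (n+1)) : colP (mtM T hT) i j = mtSS T hT i j := by
  have aux : ∀ m : ℕ, ∀ i : Fin (n+1), i.1 = m → ∀ j, colP (mtM T hT) i j = mtSS T hT i j := by
    intro m
    induction m with
    | zero =>
      intro i hi j
      rw [colP_eq_pre, pre_zero _ hi]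
      exact mtM_zero T hT hi j
    | succ m ih =>
      intro i hi j
      have hm : m < n + 1 := by omega
      set a : Fin (n+1) := ⟨m, hm⟩ with ha
      have hav : a.1 = m := rfl
      rw [colP_eq_pre, pre_succ _ (show i.1 = a.1 + 1 by omega)]
      rw [← colP_eq_pre, ih a rfl j, mtM_succ T hT (show i.1 = a.1 + 1 by omega) j]
      ring
  exact aux i.1 i rfl j

lemma mtSS01 (i j : Fin (n+1)) : mtSS T hT i j = 0 ∨ mtSS T hT i j = 1 := by
  unfold mtSS
  split <;> simp

lemma mtB_filter (i : Fin (n+1)) :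
    Finset.univ.filter (fun j => mtSS T hT i j = 1) = mtB T hT i := by
  ext j
  simp only [Finset.mem_filter, Finset.mem_univ, true_and, mtSS]
  by_cases hj : j ∈ mtB T hT i <;> simp [hj]

lemma pre_mtSS (i x : Fin (n+1)) :
    pre (fun j => mtSS T hT i j) x = ((mtB T hT i ∩ Finset.Iic x).card : ℤ) := by
  rw [pre_eq_card (mtSS01 T hT i) x, mtB_filter]

lemma card_inter (i x : Fin (n+1)) :
    (mtB T hT i ∩ Finset.Iic x).card
      = (Finset.univ.filter (fun k : Fin (i.1+1) => mtG T hT i k ≤ x)).card := by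
  have him : mtB T hT i ∩ Finset.Iic x
      = (Finset.univ.filter (fun k : Fin (i.1+1) => mtG T hT i k ≤ x)).image (mtG T hT i) := by
    ext j
    simp only [Finset.mem_inter, Finset.mem_Iic, mtB, Finset.mem_image, Finset.mem_univ,
      true_and, Finset.mem_filter]
    constructor
    · rintro ⟨⟨k, rfl⟩, hle⟩
      exact ⟨k, hle, rfl⟩
    · rintro ⟨k, hle, rfl⟩
      exact ⟨⟨k, rfl⟩, hle⟩
  rw [him, Finset.card_image_of_injective _ (mtG_strictMono T hT i).injective]

lemma mtG_diag (i : Fin (n+1)) (h : i.1 + 1 < n + 1) (j : Fin (i.1 + 1)) :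
    mtG T hT ⟨i.1 + 1, h⟩ j.castSucc ≤ mtG T hT i j ∧
      mtG T hT i j ≤ mtG T hT ⟨i.1 + 1, h⟩ j.succ := by
  obtain ⟨h1, h2⟩ := hT.2.1 i h j
  have s0 := mtG_spec T hT i j
  have s1 := mtG_spec T hT ⟨i.1 + 1, h⟩ j.castSucc
  have s2 := mtG_spec T hT ⟨i.1 + 1, h⟩ j.succ
  constructor <;> (rw [Fin.le_def]; omega)

lemma count_mono (i : Fin (n+1)) (h : i.1 + 1 < n + 1) (x : Fin (n+1)) :
    (Finset.univ.filter (fun k : Fin (i.1+1) => mtG T hT i k ≤ x)).card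
      ≤ (Finset.univ.filter (fun k : Fin (i.1+2) => mtG T hT ⟨i.1+1, h⟩ k ≤ x)).card := by
  have hsub : (Finset.univ.filter (fun k : Fin (i.1+1) => mtG T hT i k ≤ x)).image Fin.castSucc
      ⊆ Finset.univ.filter (fun k : Fin (i.1+2) => mtG T hT ⟨i.1+1, h⟩ k ≤ x) := by
    intro y hy
    simp only [Finset.mem_image, Finset.mem_filter, Finset.mem_univ, true_and] at hy ⊢
    obtain ⟨k, hk, rfl⟩ := hy
    exact le_trans (mtG_diag T hT i h k).1 hk
  calc (Finset.univ.filter (fun k : Fin (i.1+1) => mtG T hT i k ≤ x)).card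
      = ((Finset.univ.filter (fun k : Fin (i.1+1) => mtG T hT i k ≤ x)).image Fin.castSucc).card :=
        (Finset.card_image_of_injective _ (Fin.castSucc_injective _)).symm
    _ ≤ _ := Finset.card_le_card hsub

lemma count_bound (i : Fin (n+1)) (h : i.1 + 1 < n + 1) (x : Fin (n+1)) :
    (Finset.univ.filter (fun k : Fin (i.1+2) => mtG T hT ⟨i.1+1, h⟩ k ≤ x)).card
      ≤ (Finset.univ.filter (fun k : Fin (i.1+1) => mtG T hT i k ≤ x)).card + 1 := by
  have hsub : Finset.univ.filter (fun k : Fin (i.1+2) => mtG T hT ⟨i.1+1, h⟩ k ≤ x)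
      ⊆ insert 0 ((Finset.univ.filter (fun k : Fin (i.1+1) => mtG T hT i k ≤ x)).image Fin.succ) := by
    intro k hk
    simp only [Finset.mem_filter, Finset.mem_univ, true_and] at hk
    rcases Fin.eq_zero_or_eq_succ k with rfl | ⟨k', rfl⟩
    · exact Finset.mem_insert_self _ _
    · refine Finset.mem_insert_of_mem (Finset.mem_image.mpr ⟨k', ?_, rfl⟩)
      simp only [Finset.mem_filter, Finset.mem_univ, true_and]
      exact le_trans (mtG_diag T hT i h k').2 hk
  calc (Finset.univ.filter (fun k : Fin (i.1+2) => mtG T hT ⟨i.1+1, h⟩ k ≤ x)).card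
      ≤ _ := Finset.card_le_card hsub
    _ ≤ ((Finset.univ.filter (fun k : Fin (i.1+1) => mtG T hT i k ≤ x)).image Fin.succ).card + 1 :=
        Finset.card_insert_le _ _
    _ ≤ _ := by
        rw [Finset.card_image_of_injective _ (Fin.succ_injective _)]

lemma count_mono' (b c : Fin (n+1)) (hbc : c.1 = b.1 + 1) (x : Fin (n+1)) :
    (Finset.univ.filter (fun k : Fin (b.1+1) => mtG T hT b k ≤ x)).card
      ≤ (Finset.univ.filter (fun k : Fin (c.1+1) => mtG T hT c k ≤ x)).card := by
  have h : b.1 + 1 < n + 1 := by omega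
  have hc : c = ⟨b.1 + 1, h⟩ := Fin.ext hbc
  subst hc
  exact count_mono T hT b h x

lemma count_bound' (b c : Fin (n+1)) (hbc : c.1 = b.1 + 1) (x : Fin (n+1)) :
    (Finset.univ.filter (fun k : Fin (c.1+1) => mtG T hT c k ≤ x)).card
      ≤ (Finset.univ.filter (fun k : Fin (b.1+1) => mtG T hT b k ≤ x)).card + 1 := by
  have h : b.1 + 1 < n + 1 := by omega
  have hc : c = ⟨b.1 + 1, h⟩ := Fin.ext hbc
  subst hc
  exact count_bound T hT b h x

lemma Iic_last_eq_univ {x : Fin (n+1)} (hx : x.1 = n) : Finset.Iic x = Finset.univ := by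
  ext y
  simp only [Finset.mem_Iic, Finset.mem_univ, iff_true, Fin.le_def]
  omega

lemma mtM_row_altline (i : Fin (n+1)) : AltLine (mtM T hT i) := by
  rcases Nat.eq_zero_or_pos i.1 with h0 | h0
  · have hfun : mtM T hT i = fun j => mtSS T hT i j := funext (mtM_zero T hT h0)
    refine altline_of_pre (by omega) ?_ ?_
    · intro x
      rw [hfun, pre_mtSS]
      have hle : (mtB T hT i ∩ Finset.Iic x).card ≤ (mtB T hT i).card :=
        Finset.card_le_card Finset.inter_subset_left
      rw [mtB_card] at hle
      omega
    · rw [hfun, pre_mtSS, Iic_last_eq_univ (by show n + 1 - 1 = n; omega),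
        Finset.inter_univ, mtB_card]
      push_cast
      omega
  · have hm : i.1 - 1 < n + 1 := by omega
    set a : Fin (n+1) := ⟨i.1 - 1, hm⟩ with haa
    have hav : a.1 = i.1 - 1 := rfl
    have hia : i.1 = a.1 + 1 := by omega
    have hfun : mtM T hT i = fun j => mtSS T hT i j - mtSS T hT a j :=
      funext (mtM_succ T hT hia)
    have hlt : a.1 + 1 < n + 1 := by omega
    have hieq : i = ⟨a.1 + 1, hlt⟩ := Fin.ext hia
    have hpre : ∀ x, pre (mtM T hT i) x
        = ((mtB T hT i ∩ Finset.Iic x).card : ℤ) - ((mtB T hT a ∩ Finset.Iic x).card : ℤ) := by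
      intro x
      rw [hfun]
      unfold pre
      rw [Finset.sum_sub_distrib]
      rw [show (∑ j' ∈ Finset.Iic x, mtSS T hT i j') = pre (fun j => mtSS T hT i j) x from rfl]
      rw [show (∑ j' ∈ Finset.Iic x, mtSS T hT a j') = pre (fun j => mtSS T hT a j) x from rfl]
      rw [pre_mtSS, pre_mtSS]
    refine altline_of_pre (by omega) ?_ ?_
    · intro x
      rw [hpre x, card_inter, card_inter]
      have hmono := count_mono' T hT a i hia x
      have hbound := count_bound' T hT a i hia x
      omega
    · rw [hpre _, Iic_last_eq_univ (by show n + 1 - 1 = n; omega),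
        Finset.inter_univ, Finset.inter_univ, mtB_card, mtB_card]
      push_cast
      omega

lemma mtM_col_altline (j : Fin (n+1)) : AltLine (fun i => mtM T hT i j) := by
  refine altline_of_pre (by omega) ?_ ?_
  · intro i
    rw [← colP_eq_pre, mtM_colP]
    exact mtSS01 T hT i j
  · rw [← colP_eq_pre, mtM_colP]
    have hlast : ((⟨n + 1 - 1, Nat.sub_lt (by omega) Nat.one_pos⟩ : Fin (n+1)) : Fin (n+1)).1 + 1 = n + 1 := by
      show n + 1 - 1 + 1 = n + 1; omega
    unfold mtSS
    rw [if_pos]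
    rw [mtB_mem]
    refine ⟨⟨j.1, by omega⟩, ?_⟩
    rw [hT.1 _ (by show n + 1 - 1 + 1 = n + 1; omega)]
    rfl

lemma mtM_isASM : IsASM (mtM T hT) :=
  ⟨mtM_row_altline T hT, mtM_col_altline T hT⟩

lemma mtM_corr : ASMCorr (mtM T hT) T := by
  intro i j
  have hc : (∑ i' ∈ Finset.Iic i, mtM T hT i' j) = colP (mtM T hT) i j := rfl
  rw [hc, mtM_colP, ← mtB_mem T hT i j]
  unfold mtSS
  split <;> simp_all

lemma mtM_unique (M' : Fin (n+1) → Fin (n+1) → ℤ) (hM' : IsASM M')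
    (hcorr : ASMCorr M' T) : M' = mtM T hT := by
  have hcol : ∀ i j, colP M' i j = mtSS T hT i j := by
    intro i j
    have h01 : colP M' i j = 0 ∨ colP M' i j = 1 := colP01 hM' i j
    have hiff : colP M' i j = 1 ↔ j ∈ mtB T hT i := by
      rw [mtB_mem]
      exact hcorr i j
    unfold mtSS
    by_cases hmem : j ∈ mtB T hT i
    · rw [if_pos hmem]
      exact hiff.mpr hmem
    · rw [if_neg hmem]
      rcases h01 with h | h
      · exact h
      · exact absurd (hiff.mp h) hmem
  funext i j
  rcases Nat.eq_zero_or_pos i.1 with h0 | h0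
  · rw [mtM_zero T hT h0 j, ← hcol]
    rw [colP_eq_pre, pre_zero _ h0]
  · have hm : i.1 - 1 < n + 1 := by omega
    set a : Fin (n+1) := ⟨i.1 - 1, hm⟩ with haa
    have hav : a.1 = i.1 - 1 := rfl
    have hia : i.1 = a.1 + 1 := by omega
    rw [mtM_succ T hT hia j, ← hcol, ← hcol]
    have hps := pre_succ (fun i' => M' i' j) (show i.1 = a.1 + 1 from hia)
    rw [colP_eq_pre, colP_eq_pre, hps]
    ring

end MTtoASM

end AsmMt

open AsmMt

/-- The map sending an `n × n` alternating sign matrix to the triangular array whose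
`i`-th row consists of the columns `j`, listed in increasing order, for which the
partial column sum `Σ_{i'=1}^{i} a_{i',j}` equals `1`, is a bijection onto the set of
monotone triangles with bottom row `(1,2,…,n)`; in particular the number of `n × n`
alternating sign matrices equals the number of monotone triangles with bottom row
`(1,2,…,n)`. -/
theorem asm_mt_bijection (n : ℕ) :
    (∀ M : Fin (n + 1) → Fin (n + 1) → ℤ, IsASM M →
      ∃! T : TriArray (n + 1), IsMT T (fun j => (j.1 : ℤ) + 1) ∧ ASMCorr M T) ∧
    (∀ T : TriArray (n + 1), IsMT T (fun j => (j.1 : ℤ) + 1) →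
      ∃! M : Fin (n + 1) → Fin (n + 1) → ℤ, IsASM M ∧ ASMCorr M T) ∧
    Set.ncard {M : Fin (n + 1) → Fin (n + 1) → ℤ | IsASM M} =
      Set.ncard {T : TriArray (n + 1) | IsMT T (fun j => (j.1 : ℤ) + 1)} := by
  have part1 : ∀ M : Fin (n + 1) → Fin (n + 1) → ℤ, IsASM M →
      ∃! T : TriArray (n + 1), IsMT T (fun j => (j.1 : ℤ) + 1) ∧ ASMCorr M T := by
    intro M hM
    refine ⟨asmT hM, ⟨asmT_isMT hM, asmT_corr hM⟩, ?_⟩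
    rintro T' ⟨hT', hcorr⟩
    exact asmT_unique hM T' hT' hcorr
  have part2 : ∀ T : TriArray (n + 1), IsMT T (fun j => (j.1 : ℤ) + 1) →
      ∃! M : Fin (n + 1) → Fin (n + 1) → ℤ, IsASM M ∧ ASMCorr M T := by
    intro T hT
    refine ⟨mtM T hT, ⟨mtM_isASM T hT, mtM_corr T hT⟩, ?_⟩
    rintro M' ⟨hM', hcorr⟩
    exact mtM_unique T hT M' hM' hcorr
  refine ⟨part1, part2, ?_⟩
  have e : {M : Fin (n + 1) → Fin (n + 1) → ℤ | IsASM M}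
      ≃ {T : TriArray (n + 1) | IsMT T (fun j => (j.1 : ℤ) + 1)} :=
    { toFun := fun M =>
        ⟨Classical.choose (part1 M.1 M.2), (Classical.choose_spec (part1 M.1 M.2)).1.1⟩
      invFun := fun T =>
        ⟨Classical.choose (part2 T.1 T.2), (Classical.choose_spec (part2 T.1 T.2)).1.1⟩
      left_inv := by
        rintro ⟨M, hM⟩
        apply Subtype.ext
        have spec1 := Classical.choose_spec (part1 M hM)
        set T := Classical.choose (part1 M hM) with hTdef
        have spec2 := Classical.choose_spec (part2 T spec1.1.1)
        exact (spec2.2 M ⟨hM, spec1.1.2⟩).symm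
      right_inv := by
        rintro ⟨T, hT⟩
        apply Subtype.ext
        have spec2 := Classical.choose_spec (part2 T hT)
        set M := Classical.choose (part2 T hT) with hMdef
        have spec1 := Classical.choose_spec (part1 M spec2.1.1)
        exact (spec1.2 T ⟨hT, spec2.1.2⟩).symm }
  rw [← Nat.card_coe_set_eq, ← Nat.card_coe_set_eq]
  exact Nat.card_congr e
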